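/- arXiv:2603.15148 — 10 statements merged into one kernel-verified Lean document; each statement's English description precedes it below -/
import Mathlib

section
/- Let F be a finite field with |F| = q and char(F) ∉ {2,3}. The algebras A1(α1,α2,α4,β1) = (α1, α2, 1+α2, α4; β1, −α1, 1−α1, −α2), for (α1,α2,α4,β1) ∈ F^4, are pairwise non-isomorphic for distinct parameter quadruples; in particular, the number of isomorphism classes among them equals q^4. -/
/-- The bilinear multiplication on `F²` determined by a 2×4 matrix of structure
constants `M = (α₁ α₂ α₃ α₄; β₁ β₂ β₃ β₄)`, i.e. `e₁e₁ = α₁e₁+β₁e₂`,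
`e₁e₂ = α₂e₁+β₂e₂`, `e₂e₁ = α₃e₁+β₃e₂`, `e₂e₂ = α₄e₁+β₄e₂`. -/
def scMul (F : Type*) [Field F] (M : Matrix (Fin 2) (Fin 4) F)
    (x y : Fin 2 → F) : Fin 2 → F :=
  fun i => x 0 * y 0 * M i 0 + x 0 * y 1 * M i 1 + x 1 * y 0 * M i 2 + x 1 * y 1 * M i 3

/-- Two algebras given by matrices of structure constants are isomorphic iff there is
an `F`-linear bijection `g` with `g (x·y) = g x · g y`. -/
def scIso (F : Type*) [Field F] (M N : Matrix (Fin 2) (Fin 4) F) : Prop :=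
  ∃ g : (Fin 2 → F) ≃ₗ[F] (Fin 2 → F), ∀ x y, g (scMul F M x y) = scMul F N (g x) (g y)

/-- The matrix of structure constants of the algebra `A₁(α₁,α₂,α₄,β₁)`. -/
def A1mat (F : Type*) [Field F] (c : F × F × F × F) : Matrix (Fin 2) (Fin 4) F :=
  !![c.1, c.2.1, 1 + c.2.1, c.2.2.1; c.2.2.2, -c.1, 1 - c.1, -c.2.1]

section aux
variable {F : Type*} [Field F]

/-- Left multiplication as a linear map. -/
def Lmap (M : Matrix (Fin 2) (Fin 4) F) (x : Fin 2 → F) :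
    (Fin 2 → F) →ₗ[F] (Fin 2 → F) where
  toFun y := scMul F M x y
  map_add' y z := by funext i; simp [scMul]; ring
  map_smul' t y := by funext i; simp [scMul]; ring

/-- Right multiplication as a linear map. -/
def Rmap (M : Matrix (Fin 2) (Fin 4) F) (y : Fin 2 → F) :
    (Fin 2 → F) →ₗ[F] (Fin 2 → F) where
  toFun x := scMul F M x y
  map_add' x z := by funext i; simp [scMul]; ring
  map_smul' t x := by funext i; simp [scMul]; ring

/-- For the `A₁` family, the trace of left multiplication by `x` is `x 1`. -/
lemma trace_Lmap (c : F × F × F × F) (x : Fin 2 → F) :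
    LinearMap.trace F _ (Lmap (A1mat F c) x) = x 1 := by
  rw [LinearMap.trace_eq_matrix_trace F (Pi.basisFun F (Fin 2))]
  simp [Matrix.trace, LinearMap.toMatrix_apply, Lmap, scMul, A1mat,
    Fin.sum_univ_two, Pi.single_apply]
  ring

/-- For the `A₁` family, the trace of right multiplication by `y` is `y 0`. -/
lemma trace_Rmap (c : F × F × F × F) (y : Fin 2 → F) :
    LinearMap.trace F _ (Rmap (A1mat F c) y) = y 0 := by
  rw [LinearMap.trace_eq_matrix_trace F (Pi.basisFun F (Fin 2))]
  simp [Matrix.trace, LinearMap.toMatrix_apply, Rmap, scMul, A1mat,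
    Fin.sum_univ_two, Pi.single_apply]
  ring

/-- Isomorphic members of the `A₁` family have equal parameters: since the trace of
left (resp. right) multiplication by `x` equals `x 1` (resp. `x 0`) for every member
of the family, and these traces are preserved by any isomorphism, the isomorphism
must be the identity, hence the structure constants coincide. -/
lemma iso_eq (c c' : F × F × F × F) (h : scIso F (A1mat F c) (A1mat F c')) :
    c = c' := by
  obtain ⟨g, hg⟩ := h
  have hL : ∀ x, g x 1 = x 1 := by
    intro x
    have h1 : Lmap (A1mat F c') (g x) = g.conj (Lmap (A1mat F c) x) := by
      apply LinearMap.ext; intro y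
      have := hg x (g.symm y)
      simp only [LinearEquiv.conj_apply, LinearMap.coe_comp, Function.comp_apply,
        LinearEquiv.coe_coe, Lmap, LinearMap.coe_mk, AddHom.coe_mk] at *
      rw [this, g.apply_symm_apply]
    have h2 := congrArg (LinearMap.trace F _) h1
    rw [LinearMap.trace_conj', trace_Lmap, trace_Lmap] at h2
    exact h2
  have hR : ∀ x, g x 0 = x 0 := by
    intro x
    have h1 : Rmap (A1mat F c') (g x) = g.conj (Rmap (A1mat F c) x) := by
      apply LinearMap.ext; intro y
      have := hg (g.symm y) x
      simp only [LinearEquiv.conj_apply, LinearMap.coe_comp, Function.comp_apply,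
        LinearEquiv.coe_coe, Rmap, LinearMap.coe_mk, AddHom.coe_mk] at *
      rw [this, g.apply_symm_apply]
    have h2 := congrArg (LinearMap.trace F _) h1
    rw [LinearMap.trace_conj', trace_Rmap, trace_Rmap] at h2
    exact h2
  have hid : ∀ x, g x = x := by
    intro x; funext i
    fin_cases i
    · exact hR x
    · exact hL x
  have hMN : ∀ x y, scMul F (A1mat F c) x y = scMul F (A1mat F c') x y := by
    intro x y
    have := hg x y
    rw [hid, hid, hid] at this
    exact this
  have key : ∀ (j k i : Fin 2),
      scMul F (A1mat F c) (Pi.single j 1) (Pi.single k 1) i =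
      scMul F (A1mat F c') (Pi.single j 1) (Pi.single k 1) i := by
    intro j k i; rw [hMN]
  obtain ⟨a1, a2, a4, b1⟩ := c
  obtain ⟨a1', a2', a4', b1'⟩ := c'
  have e1 := key 0 0 0
  have e2 := key 0 1 0
  have e3 := key 1 1 0
  have e4 := key 0 0 1
  simp [scMul, A1mat, Pi.single_apply] at e1 e2 e3 e4
  simp_all

end aux

/-- The algebras in the family `A₁` are pairwise non-isomorphic for distinct
parameters; in particular the number of isomorphism classes among them is `q⁴`. -/
theorem count_A1_family (F : Type*) [Field F] [Fintype F]
    (h2 : ringChar F ≠ 2) (h3 : ringChar F ≠ 3)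
    (q : ℕ) (hq : q = Fintype.card F) :
    (∀ c c' : F × F × F × F, scIso F (A1mat F c) (A1mat F c') → c = c') ∧
    Nat.card (Quot (fun c c' : F × F × F × F => scIso F (A1mat F c) (A1mat F c'))) =
      q ^ 4 := by
  refine ⟨fun c c' h => iso_eq c c' h, ?_⟩
  have e : Quot (fun c c' : F × F × F × F => scIso F (A1mat F c) (A1mat F c')) ≃
      (F × F × F × F) :=
    { toFun := Quot.lift id (fun a b h => iso_eq a b h)
      invFun := Quot.mk _
      left_inv := by intro x; induction x using Quot.ind; rfl
      right_inv := fun x => rfl }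
  rw [Nat.card_congr e]
  simp [Nat.card_eq_fintype_card, hq]
  ring
end

section
/- Let F be a finite field with |F| = q and char(F) ∉ {2,3}. The number of isomorphism classes among the algebras A3(α1,α4,β2) = (α1, 0, 0, α4; 0, β2, 1−α1, 0), for (α1,α4,β2) ∈ F^3, equals 3q^2. -/
/-- The matrix of structure constants of the algebra `A₃(α₁,α₄,β₂)`. -/
def A3mat (F : Type*) [Field F] (c : F × F × F) : Matrix (Fin 2) (Fin 4) F :=
  !![c.1, 0, 0, c.2.1; 0, c.2.2, 1 - c.1, 0]

section Aux

variable {F : Type*} [Field F]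

/-- Right multiplication by `y` as a linear map. -/
def rmulMap (M : Matrix (Fin 2) (Fin 4) F) (y : Fin 2 → F) :
    (Fin 2 → F) →ₗ[F] (Fin 2 → F) where
  toFun x := scMul F M x y
  map_add' x x' := by funext i; simp only [scMul, Pi.add_apply]; ring
  map_smul' r x := by
    funext i; simp only [scMul, Pi.smul_apply, smul_eq_mul, RingHom.id_apply]; ring

lemma trace_fin2 (f : (Fin 2 → F) →ₗ[F] (Fin 2 → F)) :
    LinearMap.trace F (Fin 2 → F) f = f (Pi.single 0 1) 0 + f (Pi.single 1 1) 1 := by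
  rw [LinearMap.trace_eq_matrix_trace F (Pi.basisFun F (Fin 2))]
  simp [Matrix.trace, LinearMap.toMatrix_apply, Fin.sum_univ_two]

lemma A3_entries (c : F × F × F) :
    A3mat F c 0 0 = c.1 ∧ A3mat F c 0 1 = 0 ∧ A3mat F c 0 2 = 0 ∧ A3mat F c 0 3 = c.2.1 ∧
    A3mat F c 1 0 = 0 ∧ A3mat F c 1 1 = c.2.2 ∧ A3mat F c 1 2 = 1 - c.1 ∧
    A3mat F c 1 3 = 0 := by
  refine ⟨rfl, rfl, rfl, rfl, rfl, rfl, rfl, rfl⟩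

lemma trace_rmul_A3 (c : F × F × F) (y : Fin 2 → F) :
    LinearMap.trace F (Fin 2 → F) (rmulMap (A3mat F c) y) = y 0 := by
  rw [trace_fin2]
  obtain ⟨h1, h2, h3, h4, h5, h6, h7, h8⟩ := A3_entries c
  simp only [rmulMap, LinearMap.coe_mk, AddHom.coe_mk, scMul,
    Pi.single_eq_same, Pi.single_eq_of_ne (by decide : (1 : Fin 2) ≠ 0),
    Pi.single_eq_of_ne (by decide : (0 : Fin 2) ≠ 1), h1, h2, h3, h4, h5, h6, h7, h8]
  ring

/-- Any isomorphism of algebras in the `A₃` family preserves the first coordinate. -/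
lemma iso_coord0 {c c' : F × F × F} (g : (Fin 2 → F) ≃ₗ[F] (Fin 2 → F))
    (hg : ∀ x y, g (scMul F (A3mat F c) x y) = scMul F (A3mat F c') (g x) (g y))
    (y : Fin 2 → F) : g y 0 = y 0 := by
  have hconj : rmulMap (A3mat F c') (g y) = g.conj (rmulMap (A3mat F c) y) := by
    apply LinearMap.ext
    intro x
    rw [LinearEquiv.conj_apply]
    simp only [LinearMap.coe_comp, Function.comp_apply, LinearEquiv.coe_coe]
    show scMul F (A3mat F c') x (g y) = g (scMul F (A3mat F c) (g.symm x) y)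
    rw [hg (g.symm x) y, g.apply_symm_apply]
  have := congrArg (LinearMap.trace F (Fin 2 → F)) hconj
  rw [LinearMap.trace_conj', trace_rmul_A3, trace_rmul_A3] at this
  exact this

/-- The diagonal linear map `(x₀, x₁) ↦ (x₀, d x₁)`. -/
def dmap (d : F) : (Fin 2 → F) →ₗ[F] (Fin 2 → F) where
  toFun x := ![x 0, d * x 1]
  map_add' x y := by
    funext i
    fin_cases i <;> simp [Pi.add_apply] <;> ring
  map_smul' r x := by
    funext i
    fin_cases i <;> simp [Pi.smul_apply, smul_eq_mul] <;> ring

/-- The diagonal linear equivalence `(x₀, x₁) ↦ (x₀, d x₁)` for `d ≠ 0`. -/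
def dequiv (d : F) (hd : d ≠ 0) : (Fin 2 → F) ≃ₗ[F] (Fin 2 → F) :=
  LinearEquiv.ofLinear (dmap d) (dmap d⁻¹)
    (by
      apply LinearMap.ext; intro x; funext i
      fin_cases i <;> simp [dmap] <;> field_simp)
    (by
      apply LinearMap.ext; intro x; funext i
      fin_cases i <;> simp [dmap] <;> field_simp)

/-- The isomorphism relation on the `A₃` family, explicitly. -/
lemma iso_iff (c c' : F × F × F) :
    scIso F (A3mat F c) (A3mat F c') ↔
      c.1 = c'.1 ∧ c.2.2 = c'.2.2 ∧ ∃ d : F, d ≠ 0 ∧ c.2.1 = d ^ 2 * c'.2.1 := by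
  obtain ⟨h1, h2, h3, h4, h5, h6, h7, h8⟩ := A3_entries c
  obtain ⟨k1, k2, k3, k4, k5, k6, k7, k8⟩ := A3_entries c'
  constructor
  · rintro ⟨g, hg⟩
    have hc0 : ∀ y, g y 0 = y 0 := iso_coord0 g hg
    set e1 : Fin 2 → F := Pi.single 0 1 with he1
    set e2 : Fin 2 → F := Pi.single 1 1 with he2
    have he10 : e1 0 = 1 := Pi.single_eq_same 0 1
    have he11 : e1 1 = 0 := Pi.single_eq_of_ne (by decide) 1
    have he20 : e2 0 = 0 := Pi.single_eq_of_ne (by decide) 1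
    have he21 : e2 1 = 1 := Pi.single_eq_same 1 1
    set d : F := g e2 1 with hdd
    have hg20 : g e2 0 = 0 := by rw [hc0, he20]
    have hg10 : g e1 0 = 1 := by rw [hc0, he10]
    have hd : d ≠ 0 := by
      intro h0
      have : g e2 = 0 := by
        funext i
        fin_cases i
        · exact hg20
        · exact h0
      have : e2 = 0 := by
        have := g.map_eq_zero_iff.mp this
        exact this
      have : (1 : F) = 0 := by rw [← he21, this]; rfl
      exact one_ne_zero this
    -- helper to extract scalar equations
    have hbb : c.2.2 * d = c'.2.2 * d := by
      have hM : scMul F (A3mat F c) e1 e2 = c.2.2 • e2 := by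
        funext i
        fin_cases i <;>
          simp [scMul, he10, he11, he20, he21, h2, h6, Pi.smul_apply, smul_eq_mul]
      have := congrFun (hg e1 e2) 1
      rw [hM, map_smul] at this
      simp only [Pi.smul_apply, smul_eq_mul, ← hdd] at this
      rw [scMul, hg10, hg20, ← hdd, k5, k6, k7, k8] at this
      linear_combination this
    have haa : (1 - c.1) * d = (1 - c'.1) * d := by
      have hM : scMul F (A3mat F c) e2 e1 = (1 - c.1) • e2 := by
        funext i
        fin_cases i <;>
          simp [scMul, he10, he11, he20, he21, h3, h7, Pi.smul_apply, smul_eq_mul]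
      have := congrFun (hg e2 e1) 1
      rw [hM, map_smul] at this
      simp only [Pi.smul_apply, smul_eq_mul, ← hdd] at this
      rw [scMul, hg10, hg20, ← hdd, k5, k6, k7, k8] at this
      linear_combination this
    have hcc : c.2.1 = d ^ 2 * c'.2.1 := by
      have hM : scMul F (A3mat F c) e2 e2 = c.2.1 • e1 := by
        funext i
        fin_cases i <;>
          simp [scMul, he10, he11, he20, he21, h4, h8, Pi.smul_apply, smul_eq_mul]
      have := congrFun (hg e2 e2) 0
      rw [hM, map_smul] at this
      simp only [Pi.smul_apply, smul_eq_mul, hg10, ← hdd] at this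
      rw [scMul, hg20, ← hdd, k1, k2, k3, k4] at this
      linear_combination this
    refine ⟨?_, mul_right_cancel₀ hd hbb, d, hd, hcc⟩
    have := mul_right_cancel₀ hd haa
    linear_combination -this
  · rintro ⟨hA, hB, d, hd, hC⟩
    refine ⟨dequiv d hd, ?_⟩
    intro x y
    funext i
    show dmap d (scMul F (A3mat F c) x y) i = scMul F (A3mat F c') (dmap d x) (dmap d y) i
    fin_cases i <;>
      simp only [Fin.mk_zero, Fin.mk_one, dmap, LinearMap.coe_mk, AddHom.coe_mk, scMul,
        h1, h2, h3, h4, h5, h6, h7,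
        h8, k1, k2, k3, k4, k5, k6, k7, k8, Matrix.cons_val_zero, Matrix.cons_val_one,
        Matrix.head_cons]
    · rw [hA, hC]; ring
    · rw [hA, hB]; ring

end Aux

section Count

variable {F : Type*} [Field F]

/-- Square-class relation on `F` (including `0` as its own class). -/
def sqRel (F : Type*) [Field F] : F → F → Prop :=
  fun x y => ∃ d : F, d ≠ 0 ∧ x = d ^ 2 * y

lemma sqRel_zero {x y : F} (h : sqRel F x y) : x = 0 ↔ y = 0 := by
  obtain ⟨d, hd, rfl⟩ := h
  constructor
  · intro h0
    rcases mul_eq_zero.mp h0 with h | h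
    · exact absurd (pow_eq_zero_iff (by norm_num) |>.mp h) hd
    · exact h
  · intro h0; rw [h0, mul_zero]

lemma sqRel_isSquare {x y : F} (h : sqRel F x y) : IsSquare x ↔ IsSquare y := by
  obtain ⟨d, hd, rfl⟩ := h
  constructor
  · rintro ⟨s, hs⟩
    refine ⟨d⁻¹ * s, ?_⟩
    calc y = d⁻¹ ^ 2 * (d ^ 2 * y) := by field_simp
      _ = (d⁻¹ * s) * (d⁻¹ * s) := by rw [hs]; ring
  · rintro ⟨s, hs⟩
    exact ⟨d * s, by rw [hs]; ring⟩

open Classical in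
/-- The quotient of a finite field of odd characteristic by the square-class
relation has exactly three elements: zero, squares, nonsquares. -/
lemma card_sqRel_quot [Fintype F] (h2 : ringChar F ≠ 2) :
    Nat.card (Quot (sqRel F)) = 3 := by
  classical
  obtain ⟨n, hn⟩ := FiniteField.exists_nonsquare h2
  have hn0 : n ≠ 0 := fun h => hn (h ▸ ⟨0, by ring⟩)
  have e : Quot (sqRel F) ≃ Fin 3 := by
    refine ⟨Quot.lift (fun x => if x = 0 then (0 : Fin 3) else if IsSquare x then 1 else 2) ?_,
      fun i => ![Quot.mk _ (0 : F), Quot.mk _ (1 : F), Quot.mk _ n] i, ?_, ?_⟩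
    · intro x y hxy
      by_cases hy : y = 0
      · simp [hy, (sqRel_zero hxy).mpr hy]
      · have hx : ¬ x = 0 := fun h => hy ((sqRel_zero hxy).mp h)
        by_cases hsy : IsSquare y
        · simp [hx, hy, hsy, (sqRel_isSquare hxy).mpr hsy]
        · have : ¬ IsSquare x := fun h => hsy ((sqRel_isSquare hxy).mp h)
          simp [hx, hy, hsy, this]
    · apply Quot.ind
      intro x
      by_cases hx : x = 0
      · simp only [hx, if_pos rfl]
        rfl
      · by_cases hsx : IsSquare x
        · simp only [hx, if_neg hx, if_pos hsx]
          show Quot.mk _ (1 : F) = Quot.mk _ x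
          obtain ⟨s, hs⟩ := hsx
          have hs0 : s ≠ 0 := by
            intro h; rw [h, mul_zero] at hs; exact hx hs
          refine Quot.sound ⟨s⁻¹, inv_ne_zero hs0, ?_⟩
          rw [hs]; field_simp
        · simp only [hx, if_neg hx, if_neg hsx]
          show Quot.mk _ n = Quot.mk _ x
          have hsq : IsSquare (n * x) := by
            have hcn : quadraticChar F n = -1 :=
              quadraticChar_neg_one_iff_not_isSquare.mpr hn
            have hcx : quadraticChar F x = -1 :=
              quadraticChar_neg_one_iff_not_isSquare.mpr hsx
            have hval : quadraticChar F (n * x) = 1 := by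
              rw [map_mul, hcn, hcx]; ring
            exact (quadraticChar_one_iff_isSquare (mul_ne_zero hn0 hx)).mp hval
          obtain ⟨t, ht⟩ := hsq
          have ht0 : t ≠ 0 := by
            intro h; rw [h, mul_zero] at ht
            exact mul_ne_zero hn0 hx ht
          refine Quot.sound ⟨t * x⁻¹, mul_ne_zero ht0 (inv_ne_zero hx), ?_⟩
          field_simp
          linear_combination ht
    · intro i
      fin_cases i
      · simp
      · show (if (1:F) = 0 then (0:Fin 3) else if IsSquare (1:F) then 1 else 2) = 1
        rw [if_neg one_ne_zero, if_pos IsSquare.one]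
      · show (if n = 0 then (0:Fin 3) else if IsSquare n then 1 else 2) = 2
        rw [if_neg hn0, if_neg hn]
  rw [Nat.card_congr e]
  simp

end Count

/-- The number of isomorphism classes in the family `A₃` is `3q²`. -/
theorem count_A3_family (F : Type*) [Field F] [Fintype F]
    (h2 : ringChar F ≠ 2) (h3 : ringChar F ≠ 3)
    (q : ℕ) (hq : q = Fintype.card F) :
    Nat.card (Quot (fun c c' : F × F × F => scIso F (A3mat F c) (A3mat F c'))) =
      3 * q ^ 2 := by
  classical
  have e1 : Quot (fun c c' : F × F × F => scIso F (A3mat F c) (A3mat F c'))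
      ≃ F × F × Quot (sqRel F) := by
    refine ⟨Quot.lift (fun c => (c.1, c.2.2, Quot.mk (sqRel F) c.2.1)) ?_,
      fun p => Quot.lift (fun z => Quot.mk _ (p.1, z, p.2.1))
        (fun z z' hz => Quot.sound ((iso_iff _ _).mpr ⟨rfl, rfl, hz⟩)) p.2.2, ?_, ?_⟩
    · intro c c' h
      obtain ⟨hA, hB, hC⟩ := (iso_iff c c').mp h
      rw [hA, hB, Quot.sound hC]
    · apply Quot.ind
      intro c
      rfl
    · rintro ⟨x, y, qz⟩
      induction qz using Quot.ind with
      | _ z => rfl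
  rw [Nat.card_congr e1, Nat.card_prod, Nat.card_prod, card_sqRel_quot h2,
    Nat.card_eq_fintype_card, ← hq]
  ring
end

section
/- Let F be a finite field with char(F) ∉ {2,3}. The number of isomorphism classes among the algebras A12(β1) = (0, 1, 1, 0; β1, 0, 0, −1), for β1 ∈ F, equals 3. -/
/-- Rescaling the first coordinate, as a linear equivalence. -/
def diagEquiv (F : Type*) [Field F] (t : F) (ht : t ≠ 0) :
    (Fin 2 → F) ≃ₗ[F] (Fin 2 → F) where
  toFun x := ![t * x 0, x 1]
  invFun x := ![t⁻¹ * x 0, x 1]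
  map_add' x y := by funext i; fin_cases i <;> simp <;> ring
  map_smul' r x := by funext i; fin_cases i <;> simp <;> ring
  left_inv x := by funext i; fin_cases i <;> simp [ht] <;> field_simp
  right_inv x := by funext i; fin_cases i <;> simp [ht] <;> field_simp

theorem scIso_A12_iff (F : Type*) [Field F] (h2 : ringChar F ≠ 2) (b b' : F) :
    scIso F !![0, 1, 1, 0; b, 0, 0, -1] !![0, 1, 1, 0; b', 0, 0, -1] ↔
      ∃ t : F, t ≠ 0 ∧ b = t ^ 2 * b' := by
  have h2' : (2 : F) ≠ 0 := Ring.two_ne_zero h2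
  constructor
  · rintro ⟨g, hg⟩
    -- structure equations
    have m11 : scMul F !![0, 1, 1, 0; b, 0, 0, -1] ![1, 0] ![1, 0] = b • ![0, 1] := by
      funext i; fin_cases i <;> simp [scMul] <;> ring
    have m12 : scMul F !![0, 1, 1, 0; b, 0, 0, -1] ![1, 0] ![0, 1] = ![1, 0] := by
      funext i; fin_cases i <;> simp [scMul]
    have m22 : scMul F !![0, 1, 1, 0; b, 0, 0, -1] ![0, 1] ![0, 1] = (-1 : F) • ![0, 1] := by
      funext i; fin_cases i <;> simp [scMul]
    have H11 := hg ![1, 0] ![1, 0]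
    have H12 := hg ![1, 0] ![0, 1]
    have H22 := hg ![0, 1] ![0, 1]
    rw [m11, map_smul] at H11
    rw [m12] at H12
    rw [m22, map_smul] at H22
    have E1 := congrFun H11 0
    have E2 := congrFun H11 1
    have E3 := congrFun H12 0
    have E4 := congrFun H12 1
    have E5 := congrFun H22 0
    have E6 := congrFun H22 1
    simp [scMul] at E1 E2 E3 E4 E5 E6
    set a := g ![1, 0] 0 with hadef
    set c := g ![1, 0] 1 with hcdef
    set β := g ![0, 1] 0 with hbdef
    set d := g ![0, 1] 1 with hddef
    -- nonvanishing of columns of g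
    have hA : ¬(a = 0 ∧ c = 0) := by
      rintro ⟨h0, h1⟩
      have hz : g ![1, 0] = 0 := by
        funext i; fin_cases i
        · simpa using h0
        · simpa using h1
      have : (![1, 0] : Fin 2 → F) = 0 := g.injective (by rw [hz, map_zero])
      simpa using congrFun this 0
    have hB : ¬(β = 0 ∧ d = 0) := by
      rintro ⟨h0, h1⟩
      have hz : g ![0, 1] = 0 := by
        funext i; fin_cases i
        · simpa using h0
        · simpa using h1
      have : (![0, 1] : Fin 2 → F) = 0 := g.injective (by rw [hz, map_zero])
      simpa using congrFun this 1
    by_cases hβ : β = 0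
    · -- then d = 1, c = 0, b = a² b'
      have hd' : d * (d - 1) = 0 := by
        rw [hβ] at E6; linear_combination E6
      have hd : d = 1 := by
        rcases mul_eq_zero.mp hd' with h | h
        · exact absurd ⟨hβ, h⟩ hB
        · exact sub_eq_zero.mp h
      have hc : c = 0 := by
        have hc2 : c * 2 = 0 := by
          rw [hβ, hd] at E4; linear_combination E4
        rcases mul_eq_zero.mp hc2 with h | h
        · exact h
        · exact absurd h h2'
      have ha : a ≠ 0 := fun h => hA ⟨h, hc⟩
      refine ⟨a, ha, ?_⟩
      rw [hc, hd] at E2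
      linear_combination E2
    · -- then 2d = -1, c = 2b'aβ, b = (2a)² b'
      have hd : 2 * d = -1 := by
        have hb2 : β * (2 * d + 1) = 0 := by linear_combination -E5
        rcases mul_eq_zero.mp hb2 with h | h
        · exact absurd h hβ
        · linear_combination h
      have hc : c = 2 * (b' * a * β) := by
        linear_combination 2 * E4 - c * hd
      have ha : a ≠ 0 := by
        intro h
        exact hA ⟨h, by rw [hc, h]; ring⟩
      refine ⟨2 * a, mul_ne_zero h2' ha, ?_⟩
      have hfin : β * (b - (2 * a) ^ 2 * b') = 0 := by
        linear_combination E1 + 2 * a * hc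
      rcases mul_eq_zero.mp hfin with h | h
      · exact absurd h hβ
      · linear_combination h
  · rintro ⟨t, ht, rfl⟩
    refine ⟨diagEquiv F t ht, fun x y => ?_⟩
    funext i
    fin_cases i <;>
      simp [diagEquiv, scMul] <;> ring

/-- The number of isomorphism classes in the family
`A₁₂(β₁) = (0,1,1,0; β₁,0,0,-1)`, `β₁ ∈ F`, is `3`. -/
theorem count_A12_family (F : Type*) [Field F] [Fintype F]
    (h2 : ringChar F ≠ 2) (h3 : ringChar F ≠ 3) :
    Nat.card (Quot (fun b b' : F =>
        scIso F !![0, 1, 1, 0; b, 0, 0, -1] !![0, 1, 1, 0; b', 0, 0, -1])) = 3 := by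
  classical
  set R := fun b b' : F =>
      scIso F !![0, 1, 1, 0; b, 0, 0, -1] !![0, 1, 1, 0; b', 0, 0, -1] with hR
  have key : ∀ b b' : F, R b b' ↔ ∃ t : F, t ≠ 0 ∧ b = t ^ 2 * b' :=
    fun b b' => scIso_A12_iff F h2 b b'
  have hEquiv : Equivalence R := by
    constructor
    · intro b; exact (key b b).mpr ⟨1, one_ne_zero, by ring⟩
    · intro b b' h
      obtain ⟨t, ht, h⟩ := (key _ _).mp h
      refine (key _ _).mpr ⟨t⁻¹, inv_ne_zero ht, ?_⟩
      rw [h]; field_simp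
    · intro b₁ b₂ b₃ h h'
      obtain ⟨t, ht, h⟩ := (key _ _).mp h
      obtain ⟨s, hs, h'⟩ := (key _ _).mp h'
      exact (key _ _).mpr ⟨t * s, mul_ne_zero ht hs, by rw [h, h']; ring⟩
  have hmk : ∀ x y : F, Quot.mk R x = Quot.mk R y ↔ R x y := by
    intro x y
    rw [Quot.eq, hEquiv.eqvGen_iff]
  obtain ⟨u, hu⟩ := FiniteField.exists_nonsquare (F := F) h2
  have hu0 : u ≠ 0 := fun h => hu ⟨0, by rw [h, mul_zero]⟩
  have h20 : (2 : F) ≠ 0 := Ring.two_ne_zero h2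
  let f : Fin 3 → Quot R := ![Quot.mk R 0, Quot.mk R 1, Quot.mk R u]
  have hinj : Function.Injective f := by
    have h01 : ¬ R 0 1 := by
      rw [key]; rintro ⟨t, ht, h⟩
      rw [mul_one] at h
      exact ht (pow_eq_zero_iff two_ne_zero |>.mp h.symm)
    have h0u : ¬ R 0 u := by
      rw [key]; rintro ⟨t, ht, h⟩
      rcases mul_eq_zero.mp h.symm with h' | h'
      · exact ht (pow_eq_zero_iff two_ne_zero |>.mp h')
      · exact hu0 h'
    have h1u : ¬ R 1 u := by
      rw [key]; rintro ⟨t, ht, h⟩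
      apply hu
      refine ⟨t⁻¹, ?_⟩
      field_simp
      rw [h]; ring
    intro i j hij
    fin_cases i <;> fin_cases j
    · rfl
    · exact absurd ((hmk 0 1).mp (by simpa [f] using hij)) h01
    · exact absurd ((hmk 0 u).mp (by simpa [f] using hij)) h0u
    · exact absurd (hEquiv.symm ((hmk 1 0).mp (by simpa [f] using hij))) h01
    · rfl
    · exact absurd ((hmk 1 u).mp (by simpa [f] using hij)) h1u
    · exact absurd (hEquiv.symm ((hmk u 0).mp (by simpa [f] using hij))) h0u
    · exact absurd (hEquiv.symm ((hmk u 1).mp (by simpa [f] using hij))) h1u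
    · rfl
  have hsurj : Function.Surjective f := by
    intro q
    induction q using Quot.ind with
    | _ b =>
      by_cases hb : b = 0
      · exact ⟨0, by simp [f, hb]⟩
      by_cases hsq : IsSquare b
      · refine ⟨1, ?_⟩
        obtain ⟨c, hc⟩ := hsq
        have hc0 : c ≠ 0 := by
          rintro rfl
          rw [mul_zero] at hc
          exact hb hc
        show Quot.mk R 1 = Quot.mk R b
        refine Quot.sound ((key 1 b).mpr ⟨c⁻¹, inv_ne_zero hc0, ?_⟩)
        rw [hc]
        field_simp
      · refine ⟨2, ?_⟩
        have hbn : quadraticChar F b = -1 := quadraticChar_neg_one_iff_not_isSquare.mpr hsq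
        have hun : quadraticChar F u = -1 := quadraticChar_neg_one_iff_not_isSquare.mpr hu
        have hbi : quadraticChar F b⁻¹ = -1 := by
          have h1 := map_mul (quadraticChar F) b b⁻¹
          rw [mul_inv_cancel₀ hb, map_one, hbn] at h1
          linarith
        have hchi : quadraticChar F (u * b⁻¹) = 1 := by
          rw [map_mul, hun, hbi]; ring
        have hsq2 : IsSquare (u * b⁻¹) :=
          (quadraticChar_one_iff_isSquare (mul_ne_zero hu0 (inv_ne_zero hb))).mp hchi
        obtain ⟨t, ht⟩ := hsq2
        have ht0 : t ≠ 0 := by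
          rintro rfl
          rw [mul_zero] at ht
          exact mul_ne_zero hu0 (inv_ne_zero hb) ht
        show Quot.mk R u = Quot.mk R b
        refine Quot.sound ((key u b).mpr ⟨t, ht0, ?_⟩)
        field_simp at ht
        rw [ht]; ring
  have e : Fin 3 ≃ Quot R := Equiv.ofBijective f ⟨hinj, hsurj⟩
  rw [← Nat.card_congr e]
  simp
end

section
/- Let F be a field with char(F) ∉ {2,3} and let β1 ∈ F. Then the algebra A10(β1) with matrix of structure constants (0, 1, 1, 1; β1, 0, 0, −1) is isomorphic to the algebra A10(4−β1) with matrix of structure constants (0, 1, 1, 1; 4−β1, 0, 0, −1). -/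
/-- `A₁₀(β₁) ≃ A₁₀(4 - β₁)` over a field of characteristic ≠ 2, 3. -/
theorem A10_iso_four_sub (F : Type*) [Field F]
    (h2 : ringChar F ≠ 2) (h3 : ringChar F ≠ 3) (b : F) :
    scIso F !![0, 1, 1, 1; b, 0, 0, -1] !![0, 1, 1, 1; 4 - b, 0, 0, -1] := by
  refine ⟨{ toFun := fun x => ![x 0, -2 * x 0 - x 1],
            invFun := fun x => ![x 0, -2 * x 0 - x 1],
            map_add' := ?_, map_smul' := ?_, left_inv := ?_, right_inv := ?_ }, ?_⟩
  · intro x y; funext i; fin_cases i <;> simp <;> ring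
  · intro c x; funext i; fin_cases i <;> simp <;> ring
  · intro x; funext i; fin_cases i <;> simp <;> ring
  · intro x; funext i; fin_cases i <;> simp <;> ring
  · intro x y; funext i
    fin_cases i <;>
      simp [scMul, Matrix.cons_val_zero, Matrix.cons_val_one, Matrix.head_cons] <;> ring
end

section
/- Let F be a field with char(F) ∉ {2,3}, let β1 ∈ F, and let a ∈ F with a ≠ 0. Then the algebra A11(β1) with matrix of structure constants (0, 0, 0, 1; β1, 0, 0, 0) is isomorphic to the algebra A11(a^3·β1) with matrix of structure constants (0, 0, 0, 1; a^3·β1, 0, 0, 0). -/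
/-- `A₁₁(β₁) ≃ A₁₁(a³β₁)` over a field of characteristic ≠ 2, 3, for `a ≠ 0`. -/
theorem A11_iso_cube_scale (F : Type*) [Field F]
    (h2 : ringChar F ≠ 2) (h3 : ringChar F ≠ 3) (b a : F) (ha : a ≠ 0) :
    scIso F !![0, 0, 0, 1; b, 0, 0, 0] !![0, 0, 0, 1; a ^ 3 * b, 0, 0, 0] := by
  refine ⟨LinearEquiv.piCongrRight (fun i =>
    LinearEquiv.smulOfNeZero F F (if i = 0 then a⁻¹ ^ 2 else a⁻¹)
      (by split <;> simp [ha, pow_ne_zero])), fun x y => ?_⟩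
  funext i
  fin_cases i <;>
    simp [scMul, LinearEquiv.piCongrRight, LinearEquiv.smulOfNeZero, smul_eq_mul,
      Matrix.cons_val_zero, Matrix.cons_val_one, LinearEquiv.smulOfUnit,
      DistribMulAction.toLinearEquiv, Units.smul_def, smul_eq_mul] <;>
    field_simp <;> ring_nf <;> tauto
end

section
/- Let F be a field with char(F) ∉ {2,3}, let β1 ∈ F, and let a ∈ F with a ≠ 0. Then the algebra A12(β1) with matrix of structure constants (0, 1, 1, 0; β1, 0, 0, −1) is isomorphic to the algebra A12(a^2·β1) with matrix of structure constants (0, 1, 1, 0; a^2·β1, 0, 0, −1). -/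
/-- `A₁₂(β₁) ≃ A₁₂(a²β₁)` over a field of characteristic ≠ 2, 3, for `a ≠ 0`. -/
theorem A12_iso_square_scale (F : Type*) [Field F]
    (h2 : ringChar F ≠ 2) (h3 : ringChar F ≠ 3) (b a : F) (ha : a ≠ 0) :
    scIso F !![0, 1, 1, 0; b, 0, 0, -1] !![0, 1, 1, 0; a ^ 2 * b, 0, 0, -1] := by
  refine ⟨{ toFun := fun x => ![a⁻¹ * x 0, x 1],
            invFun := fun x => ![a * x 0, x 1],
            map_add' := ?_, map_smul' := ?_, left_inv := ?_, right_inv := ?_ }, ?_⟩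
  · intro x y; funext i; fin_cases i <;> simp <;> ring
  · intro c x; funext i; fin_cases i <;> simp [Pi.smul_apply, smul_eq_mul] <;> ring
  · intro x; funext i; fin_cases i <;> simp <;> field_simp
  · intro x; funext i; fin_cases i <;> simp <;> field_simp
  · intro x y; funext i
    fin_cases i <;>
      simp [scMul, Matrix.cons_val_zero, Matrix.cons_val_one, Matrix.head_cons] <;> field_simp <;> ring
end

section
/- Let F be a field with char(F) ∉ {2,3}. Then: (i) the algebra with matrix of structure constants (1, 0, 0, 0; 0, −1, −1, 0) is isomorphic to the algebra A12(0) with matrix of structure constants (0, 1, 1, 0; 0, 0, 0, −1); and (ii) the algebra with matrix of structure constants (0, 0, 0, 0; 1, 0, 0, 0) is isomorphic to the algebra A11(0) with matrix of structure constants (0, 0, 0, 1; 0, 0, 0, 0). -/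
/-- Over a field of characteristic ≠ 2, 3: `(1,0,0,0; 0,-1,-1,0) ≃ A₁₂(0)` and
`(0,0,0,0; 1,0,0,0) ≃ A₁₁(0)`. -/
theorem special_iso_A12_zero_and_A11_zero (F : Type*) [Field F]
    (h2 : ringChar F ≠ 2) (h3 : ringChar F ≠ 3) :
    scIso F !![1, 0, 0, 0; 0, -1, -1, 0] !![0, 1, 1, 0; 0, 0, 0, -1] ∧
    scIso F !![0, 0, 0, 0; 1, 0, 0, 0] !![0, 0, 0, 1; 0, 0, 0, 0] := by
  constructor
  · refine ⟨{ toFun := fun x => ![x 1, -x 0]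
              invFun := fun x => ![-x 1, x 0]
              map_add' := by intro x y; funext i; fin_cases i <;> simp <;> ring
              map_smul' := by intro c x; funext i; fin_cases i <;> simp <;> ring
              left_inv := by intro x; funext i; fin_cases i <;> simp
              right_inv := by intro x; funext i; fin_cases i <;> simp }, ?_⟩
    intro x y
    funext i
    fin_cases i <;>
      simp [scMul, Matrix.cons_val_zero, Matrix.cons_val_one] <;> ring
  · refine ⟨{ toFun := fun x => ![x 1, x 0]
              invFun := fun x => ![x 1, x 0]
              map_add' := by intro x y; funext i; fin_cases i <;> simp
              map_smul' := by intro c x; funext i; fin_cases i <;> simp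
              left_inv := by intro x; funext i; fin_cases i <;> simp
              right_inv := by intro x; funext i; fin_cases i <;> simp }, ?_⟩
    intro x y
    funext i
    fin_cases i <;>
      simp [scMul, Matrix.cons_val_zero, Matrix.cons_val_one] <;> ring
end

section
/- Let F be a field with char(F) = 2, let β1 ∈ F, and let a ∈ F satisfy β1·(β1·a^3+a+1)(β1·a^2+β1·a+1) ≠ 0. Then the algebra A8,2(β1) with matrix of structure constants (0, 1, 1, 1; β1, 0, 0, 1) is isomorphic to the algebra A8,2(β1') with matrix of structure constants (0, 1, 1, 1; β1', 0, 0, 1), where β1' = β1^2·(β1·a^3+a+1)^2 / (β1·a^2+β1·a+1)^3. -/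
set_option maxHeartbeats 1000000 in
/-- `A₈,₂(β₁) ≃ A₈,₂(β₁'(a))` over a field of characteristic 2, where
`β₁'(a) = β₁²(β₁a³+a+1)² / (β₁a²+β₁a+1)³`. -/
theorem A82_iso_param_change (F : Type*) [Field F]
    (h2 : ringChar F = 2) (b a : F)
    (hpoly : b * ((b * a ^ 3 + a + 1) * (b * a ^ 2 + b * a + 1)) ≠ 0) :
    scIso F !![0, 1, 1, 1; b, 0, 0, 1]
      !![0, 1, 1, 1;
         b ^ 2 * (b * a ^ 3 + a + 1) ^ 2 / (b * a ^ 2 + b * a + 1) ^ 3, 0, 0, 1] := by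
  have hb : b ≠ 0 := fun h => hpoly (by rw [h]; ring)
  have hc1 : b * a ^ 3 + a + 1 ≠ 0 := fun h => hpoly (by rw [h]; ring)
  have hc2 : b * a ^ 2 + b * a + 1 ≠ 0 := fun h => hpoly (by rw [h]; ring)
  have htwo : (2 : F) = 0 := by
    have := ringChar.Nat.cast_ringChar (R := F)
    rw [h2] at this; exact_mod_cast this
  set Bn : F := b ^ 2 * (b * a ^ 3 + a + 1) ^ 2 / (b * a ^ 2 + b * a + 1) ^ 3 with hB
  have hB' : Bn * (b * a ^ 2 + b * a + 1) ^ 3 = b ^ 2 * (b * a ^ 3 + a + 1) ^ 2 := by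
    rw [hB]; exact div_mul_cancel₀ _ (pow_ne_zero _ hc2)
  set G : Matrix (Fin 2) (Fin 2) F :=
    !![(1 + a ^ 2 * b) * (b * a ^ 2 + b * a + 1) ^ 2 / (b * (b * a ^ 3 + a + 1) ^ 2),
       (b * a ^ 2 + b * a + 1) ^ 2 / (b * (b * a ^ 3 + a + 1) ^ 2);
       b * (b * a ^ 3 + a + 1) * (b * a ^ 2 + b * a + 1) / (b * (b * a ^ 3 + a + 1) ^ 2),
       a * b * (b * a ^ 3 + a + 1) * (b * a ^ 2 + b * a + 1) / (b * (b * a ^ 3 + a + 1) ^ 2)] with hG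
  set Gi : Matrix (Fin 2) (Fin 2) F :=
    !![a * b * (b * a ^ 3 + a + 1) / (b * a ^ 2 + b * a + 1) ^ 2,
       (b * a ^ 2 + b * a + 1) / (b * a ^ 2 + b * a + 1) ^ 2;
       b * (b * a ^ 3 + a + 1) / (b * a ^ 2 + b * a + 1) ^ 2,
       (1 + a ^ 2 * b) * (b * a ^ 2 + b * a + 1) / (b * a ^ 2 + b * a + 1) ^ 2] with hGi
  have hC : CharP F 2 := ringChar.of_eq h2
  have hn1 : b * a * (a + 1) + 1 ≠ 0 := by intro h; apply hc2; linear_combination h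
  have hn2 : a * (b * a ^ 2 + 1) + 1 ≠ 0 := by intro h; apply hc1; linear_combination h
  have hn3 : a * b * (a + 1) + 1 ≠ 0 := by intro h; apply hc2; linear_combination h
  have hn4 : a * (a ^ 2 * b + 1) + 1 ≠ 0 := by intro h; apply hc1; linear_combination h
  have hGGi : G * Gi = 1 := by
    ext i j
    fin_cases i <;> fin_cases j <;>
      simp [hG, hGi, Matrix.mul_apply, Fin.sum_univ_two] <;> field_simp
    all_goals ring_nf
    all_goals reduce_mod_char!
  have hGiG : Gi * G = 1 := by
    ext i j
    fin_cases i <;> fin_cases j <;>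
      simp [hG, hGi, Matrix.mul_apply, Fin.sum_univ_two] <;> field_simp
    all_goals ring_nf
    all_goals reduce_mod_char!
  refine ⟨LinearEquiv.ofLinear (Matrix.toLin' G) (Matrix.toLin' Gi) ?_ ?_, ?_⟩
  · rw [← Matrix.toLin'_mul, hGGi, Matrix.toLin'_one]
  · rw [← Matrix.toLin'_mul, hGiG, Matrix.toLin'_one]
  · intro x y
    funext i
    fin_cases i
    · simp [scMul, Matrix.toLin'_apply, Matrix.mulVec, dotProduct,
        Fin.sum_univ_two, hG]
      field_simp
      ring_nf
      reduce_mod_char!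
    · simp [scMul, Matrix.toLin'_apply, Matrix.mulVec, dotProduct,
        Fin.sum_univ_two, hG]
      simp only [hB]
      field_simp
      ring_nf
      reduce_mod_char!
end

section
/- Let F be a field with char(F) ∉ {2,3} and let β1 ∈ F. The algebras A10(β1) = (0, 1, 1, 1; β1, 0, 0, −1), A11(β1) = (0, 0, 0, 1; β1, 0, 0, 0) and A12(β1) = (0, 1, 1, 0; β1, 0, 0, −1) are all commutative and satisfy x·(x·x) = (x·x)·x for all x; moreover, writing x = u·e1 + v·e2, one has x·(x·x) = (β1·u^2 + β1·u·v + v^2)·x in A10(β1), x·(x·x) = (β1·u·v)·x in A11(β1), and x·(x·x) = (β1·u^2 + v^2)·x in A12(β1). -/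
/-- The algebras `A₁₀(β₁)`, `A₁₁(β₁)`, `A₁₂(β₁)` are commutative, satisfy
`x(xx) = (xx)x`, and for `x = u e₁ + v e₂` one has `x(xx) = (β₁u²+β₁uv+v²)x`,
`x(xx) = (β₁uv)x` and `x(xx) = (β₁u²+v²)x` respectively. -/
theorem A10_A11_A12_third_power (F : Type*) [Field F]
    (h2 : ringChar F ≠ 2) (h3 : ringChar F ≠ 3) (b : F) :
    ((∀ x y, scMul F !![0, 1, 1, 1; b, 0, 0, -1] x y =
        scMul F !![0, 1, 1, 1; b, 0, 0, -1] y x) ∧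
     (∀ x, scMul F !![0, 1, 1, 1; b, 0, 0, -1] x
          (scMul F !![0, 1, 1, 1; b, 0, 0, -1] x x) =
        scMul F !![0, 1, 1, 1; b, 0, 0, -1]
          (scMul F !![0, 1, 1, 1; b, 0, 0, -1] x x) x) ∧
     (∀ u v : F, scMul F !![0, 1, 1, 1; b, 0, 0, -1] ![u, v]
          (scMul F !![0, 1, 1, 1; b, 0, 0, -1] ![u, v] ![u, v]) =
        (b * u ^ 2 + b * u * v + v ^ 2) • ![u, v])) ∧
    ((∀ x y, scMul F !![0, 0, 0, 1; b, 0, 0, 0] x y =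
        scMul F !![0, 0, 0, 1; b, 0, 0, 0] y x) ∧
     (∀ x, scMul F !![0, 0, 0, 1; b, 0, 0, 0] x
          (scMul F !![0, 0, 0, 1; b, 0, 0, 0] x x) =
        scMul F !![0, 0, 0, 1; b, 0, 0, 0]
          (scMul F !![0, 0, 0, 1; b, 0, 0, 0] x x) x) ∧
     (∀ u v : F, scMul F !![0, 0, 0, 1; b, 0, 0, 0] ![u, v]
          (scMul F !![0, 0, 0, 1; b, 0, 0, 0] ![u, v] ![u, v]) =
        (b * u * v) • ![u, v])) ∧
    ((∀ x y, scMul F !![0, 1, 1, 0; b, 0, 0, -1] x y =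
        scMul F !![0, 1, 1, 0; b, 0, 0, -1] y x) ∧
     (∀ x, scMul F !![0, 1, 1, 0; b, 0, 0, -1] x
          (scMul F !![0, 1, 1, 0; b, 0, 0, -1] x x) =
        scMul F !![0, 1, 1, 0; b, 0, 0, -1]
          (scMul F !![0, 1, 1, 0; b, 0, 0, -1] x x) x) ∧
     (∀ u v : F, scMul F !![0, 1, 1, 0; b, 0, 0, -1] ![u, v]
          (scMul F !![0, 1, 1, 0; b, 0, 0, -1] ![u, v] ![u, v]) =
        (b * u ^ 2 + v ^ 2) • ![u, v])) := by
  refine ⟨⟨?_, ?_, ?_⟩, ⟨?_, ?_, ?_⟩, ⟨?_, ?_, ?_⟩⟩ <;>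
    intros <;> funext i <;> fin_cases i <;>
    simp [scMul, Matrix.cons_val_zero, Matrix.cons_val_one, Pi.smul_apply, smul_eq_mul] <;>
    first
    | exact Or.inl (by ring)
    | ring
end

section
/- Let F be a field with char(F) ∉ {2,3}, and let β, β', β'' ∈ F be such that the polynomial (β·t^3−3t−1)(β·t^2+β·t+1)(β^2·t^3+6β·t^2+3β·t+β−2) has no root in F, β' ≠ 0, and the polynomial β'−t^3 has no root in F. Then the three algebras A10(β) = (0, 1, 1, 1; β, 0, 0, −1), A11(β') = (0, 0, 0, 1; β', 0, 0, 0) and A12(β'') = (0, 1, 1, 0; β'', 0, 0, −1) are pairwise non-isomorphic. -/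
section aux
variable {F : Type*} [Field F]

lemma aux_three_ne_zero (h3 : ringChar F ≠ 3) : (3 : F) ≠ 0 := by
  intro h
  have hd : ringChar F ∣ 3 := (ringChar.spec F 3).mp (by exact_mod_cast h)
  rcases Nat.prime_three.eq_one_or_self_of_dvd _ hd with h1 | h1
  · have h0 : ((ringChar F : ℕ) : F) = 0 := (ringChar.spec F _).mpr dvd_rfl
    rw [h1] at h0
    simpa using h0
  · exact h3 h1

lemma aux_vec_ne_zero (x : Fin 2 → F) (hx : x ≠ 0) : x 0 ≠ 0 ∨ x 1 ≠ 0 := by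
  by_contra hc
  push_neg at hc
  exact hx (funext fun i => by fin_cases i <;> simp [hc.1, hc.2])

lemma aux_vec_eq_zero (x : Fin 2 → F) (h0 : x 0 = 0) (h1 : x 1 = 0) : x = 0 :=
  funext fun i => by fin_cases i <;> simp [h0, h1]

lemma aux_A10_no_idem {β : F}
    (hβ : ∀ t : F, (β * t ^ 3 - 3 * t - 1) * (β * t ^ 2 + β * t + 1) *
      (β ^ 2 * t ^ 3 + 6 * β * t ^ 2 + 3 * β * t + β - 2) ≠ 0)
    (x : Fin 2 → F) (h : scMul F !![0, 1, 1, 1; β, 0, 0, -1] x x = x) : x = 0 := by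
  have h0 := congrFun h 0
  have h1 := congrFun h 1
  simp [scMul, Matrix.cons_val_zero, Matrix.cons_val_one, Matrix.head_cons,
    Matrix.cons_val_two, Matrix.cons_val_three, Matrix.vecHead, Matrix.vecTail] at h0 h1
  -- h0 : x 0 * x 1 + x 1 * x 0 + x 1 * x 1 = x 0
  -- h1 : x 0 * x 0 * β + -(x 1 * x 1) = x 1
  by_cases hb0 : x 1 = 0
  · refine aux_vec_eq_zero _ ?_ hb0
    linear_combination (2 * x 0 + x 1) * hb0 - h0
  · exfalso
    have h12 : 1 - 2 * x 1 ≠ 0 := by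
      intro hc
      apply hb0
      have hsq : x 1 * x 1 = 0 := by linear_combination h0 + x 0 * hc
      exact (mul_self_eq_zero).mp hsq
    have e1 : x 0 * (1 - 2 * x 1) = x 1 ^ 2 := by linear_combination -h0
    have hbb : x 1 * (β * x 1 ^ 3 - 4 * x 1 ^ 3 + 3 * x 1 - 1) = 0 := by
      linear_combination (1 - 2 * x 1) ^ 2 * h1 - β * (x 1 ^ 2 + x 0 * (1 - 2 * x 1)) * e1
    have key3 : β * x 1 ^ 3 - 4 * x 1 ^ 3 + 3 * x 1 - 1 = 0 :=
      (mul_eq_zero.mp hbb).resolve_left hb0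
    apply hβ (x 1 / (1 - 2 * x 1))
    have hf : β * (x 1 / (1 - 2 * x 1)) ^ 3 - 3 * (x 1 / (1 - 2 * x 1)) - 1 = 0 := by
      have ht : x 1 / (1 - 2 * x 1) * (1 - 2 * x 1) = x 1 := div_mul_cancel₀ _ h12
      apply mul_left_cancel₀ (pow_ne_zero 3 h12)
      linear_combination β * ((x 1 / (1 - 2 * x 1) * (1 - 2 * x 1)) ^ 2 + x 1 / (1 - 2 * x 1) * (1 - 2 * x 1) * x 1 + x 1 ^ 2) * ht - 3 * (1 - 2 * x 1) ^ 2 * ht + key3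
    rw [hf]
    ring

lemma aux_A11_no_idem {β' : F} (hβ' : ∀ t : F, β' - t ^ 3 ≠ 0)
    (x : Fin 2 → F) (h : scMul F !![0, 0, 0, 1; β', 0, 0, 0] x x = x) : x = 0 := by
  have h0 := congrFun h 0
  have h1 := congrFun h 1
  simp [scMul, Matrix.cons_val_zero, Matrix.cons_val_one, Matrix.head_cons,
    Matrix.cons_val_two, Matrix.cons_val_three, Matrix.vecHead, Matrix.vecTail] at h0 h1
  by_cases hb0 : x 1 = 0
  · refine aux_vec_eq_zero _ ?_ hb0
    linear_combination (x 1) * hb0 - h0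
  · exfalso
    have hz : x 1 * (β' * x 1 ^ 3 - 1) = 0 := by
      linear_combination h1 + β' * (x 1 * x 1 + x 0) * h0
    have hb3 : β' * x 1 ^ 3 = 1 := by
      have := (mul_eq_zero.mp hz).resolve_left hb0
      linear_combination this
    apply hβ' (x 1)⁻¹
    field_simp
    linear_combination hb3

lemma aux_A10_no_zd (h3 : ringChar F ≠ 3) {β : F}
    (hβ : ∀ t : F, (β * t ^ 3 - 3 * t - 1) * (β * t ^ 2 + β * t + 1) *
      (β ^ 2 * t ^ 3 + 6 * β * t ^ 2 + 3 * β * t + β - 2) ≠ 0)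
    (a b : Fin 2 → F) (ha : a ≠ 0) (hb : b ≠ 0)
    (h : scMul F !![0, 1, 1, 1; β, 0, 0, -1] a b = 0) : False := by
  have hβ0 : β ≠ 0 := by
    intro hc
    apply hβ (-(3 : F)⁻¹)
    rw [hc]
    have h3' := aux_three_ne_zero h3
    field_simp
    ring
  have h0 := congrFun h 0
  have h1 := congrFun h 1
  simp [scMul, Matrix.cons_val_zero, Matrix.cons_val_one, Matrix.head_cons,
    Matrix.cons_val_two, Matrix.cons_val_three, Matrix.vecHead, Matrix.vecTail] at h0 h1
  by_cases ha1 : a 1 = 0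
  · have ha0 : a 0 ≠ 0 := (aux_vec_ne_zero a ha).resolve_right (by simpa using ha1)
    have hb1 : b 1 = 0 := by
      have hz : a 0 * b 1 = 0 := by
        linear_combination h0 - (b 0 + b 1) * ha1
      exact (mul_eq_zero.mp hz).resolve_left ha0
    have hb0' : b 0 = 0 := by
      have hz : β * (a 0 * b 0) = 0 := by
        linear_combination h1 + (b 1) * ha1
      rcases mul_eq_zero.mp hz with h' | h'
      · exact absurd h' hβ0
      · exact (mul_eq_zero.mp h').resolve_left ha0
    exact hb (aux_vec_eq_zero _ hb0' hb1)
  · have key : b 0 * (β * (a 0) ^ 2 + β * (a 0) * (a 1) + (a 1) ^ 2) = 0 := by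
      linear_combination (a 1) * h0 + (a 0 + a 1) * h1
    have hf : β * (a 0) ^ 2 + β * (a 0) * (a 1) + (a 1) ^ 2 ≠ 0 := by
      intro hc
      apply hβ (a 0 / a 1)
      have hfac : β * (a 0 / a 1) ^ 2 + β * (a 0 / a 1) + 1 = 0 := by
        field_simp
        linear_combination hc
      rw [hfac]
      ring
    have hb0' : b 0 = 0 := (mul_eq_zero.mp key).resolve_right hf
    have hb1 : b 1 = 0 := by
      have hz : a 1 * b 1 = 0 := by
        linear_combination β * (a 0) * hb0' - h1
      exact (mul_eq_zero.mp hz).resolve_left ha1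
    exact hb (aux_vec_eq_zero _ hb0' hb1)

lemma aux_iso_idem {M N : Matrix (Fin 2) (Fin 4) F}
    (g : (Fin 2 → F) ≃ₗ[F] (Fin 2 → F))
    (hg : ∀ x y, g (scMul F M x y) = scMul F N (g x) (g y))
    (v : Fin 2 → F) (hv : scMul F N v v = v) :
    scMul F M (g.symm v) (g.symm v) = g.symm v := by
  apply g.injective
  rw [hg, g.apply_symm_apply, hv]

end aux


/-- Under the stated root-freeness conditions, `A₁₀(β)`, `A₁₁(β')`, `A₁₂(β'')`
are pairwise non-isomorphic. -/
theorem A10_A11_A12_pairwise_nonisomorphic (F : Type*) [Field F]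
    (h2 : ringChar F ≠ 2) (h3 : ringChar F ≠ 3) (β β' β'' : F)
    (hβ : ∀ t : F, (β * t ^ 3 - 3 * t - 1) * (β * t ^ 2 + β * t + 1) *
      (β ^ 2 * t ^ 3 + 6 * β * t ^ 2 + 3 * β * t + β - 2) ≠ 0)
    (hβ'0 : β' ≠ 0) (hβ' : ∀ t : F, β' - t ^ 3 ≠ 0) :
    ¬ scIso F !![0, 1, 1, 1; β, 0, 0, -1] !![0, 0, 0, 1; β', 0, 0, 0] ∧
    ¬ scIso F !![0, 1, 1, 1; β, 0, 0, -1] !![0, 1, 1, 0; β'', 0, 0, -1] ∧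
    ¬ scIso F !![0, 0, 0, 1; β', 0, 0, 0] !![0, 1, 1, 0; β'', 0, 0, -1] := by
  have hv : scMul F !![0, 1, 1, 0; β'', 0, 0, -1] ![0, -1] ![0, -1] = ![0, -1] := by
    funext i
    fin_cases i <;>
      simp [scMul, Matrix.cons_val_zero, Matrix.cons_val_one, Matrix.head_cons,
        Matrix.cons_val_two, Matrix.cons_val_three, Matrix.vecHead, Matrix.vecTail]
  have hvne : (![0, -1] : Fin 2 → F) ≠ 0 := by
    intro hc
    have := congrFun hc 1
    simp at this
  refine ⟨?_, ?_, ?_⟩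
  · rintro ⟨g, hg⟩
    have hane : g.symm ![1, 0] ≠ 0 := by
      intro hc
      have h' := congrArg g hc
      rw [g.apply_symm_apply, map_zero] at h'
      have := congrFun h' 0
      simp at this
    have hbne : g.symm ![0, 1] ≠ 0 := by
      intro hc
      have h' := congrArg g hc
      rw [g.apply_symm_apply, map_zero] at h'
      have := congrFun h' 1
      simp at this
    have hzero : scMul F !![0, 1, 1, 1; β, 0, 0, -1] (g.symm ![1, 0]) (g.symm ![0, 1]) = 0 := by
      apply g.injective
      rw [hg, map_zero, g.apply_symm_apply, g.apply_symm_apply]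
      funext i
      fin_cases i <;>
        simp [scMul, Matrix.cons_val_zero, Matrix.cons_val_one, Matrix.head_cons,
          Matrix.cons_val_two, Matrix.cons_val_three, Matrix.vecHead, Matrix.vecTail]
    exact aux_A10_no_zd h3 hβ _ _ hane hbne hzero
  · rintro ⟨g, hg⟩
    have hidem := aux_iso_idem g hg _ hv
    have hz := aux_A10_no_idem hβ _ hidem
    apply hvne
    have h' := congrArg g hz
    rwa [g.apply_symm_apply, map_zero] at h'
  · rintro ⟨g, hg⟩
    have hidem := aux_iso_idem g hg _ hv
    have hz := aux_A11_no_idem hβ' _ hidem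
    apply hvne
    have h' := congrArg g hz
    rwa [g.apply_symm_apply, map_zero] at h'
end
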